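/- Let X be a compact Hausdorff space, A a unital C(X)-algebra, and a ∈ A. Then the fibre norm function x ↦ ‖a_x‖ = dist(a, I_x) is upper semicontinuous on X. -/

import Mathlib

open Metric

/-- The fibre ideal `I_x` of a `C(X)`-algebra `A` with structure map `Φ : C(X) → A` at a
point `x ∈ X`: the closure of the set of finite sums of elements `Φ(f) * a` with
`f x = 0` and `a ∈ A`. -/
def fiberIdeal {X : Type*} [TopologicalSpace X] {A : Type*} [CStarAlgebra A]
    (Φ : C(X, ℂ) →⋆ₐ[ℂ] A) (x : X) : Set A :=
  closure (AddSubmonoid.closure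
    {c : A | ∃ (f : C(X, ℂ)) (a : A), f x = 0 ∧ c = Φ f * a} : Set A)

lemma fiberIdeal_nonempty {X : Type*} [TopologicalSpace X] {A : Type*} [CStarAlgebra A]
    (Φ : C(X, ℂ) →⋆ₐ[ℂ] A) (x : X) : (fiberIdeal Φ x).Nonempty :=
  ⟨0, subset_closure (AddSubmonoid.zero_mem _)⟩

lemma fiberIdeal_add_mem {X : Type*} [TopologicalSpace X] {A : Type*} [CStarAlgebra A]
    (Φ : C(X, ℂ) →⋆ₐ[ℂ] A) (x : X) {u v : A}
    (hu : u ∈ fiberIdeal Φ x) (hv : v ∈ fiberIdeal Φ x) : u + v ∈ fiberIdeal Φ x :=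
  (AddSubmonoid.closure _).topologicalClosure.add_mem hu hv

lemma infDist_add_le' {A : Type*} [SeminormedAddCommGroup A] {S : Set A} (hne : S.Nonempty)
    (hS : ∀ u ∈ S, ∀ v ∈ S, u + v ∈ S) (c₁ c₂ : A) :
    infDist (c₁ + c₂) S ≤ infDist c₁ S + infDist c₂ S := by
  refine le_of_forall_pos_le_add fun ε hε => ?_
  obtain ⟨u, huS, hu⟩ := (infDist_lt_iff hne).1
    (lt_add_of_pos_right (infDist c₁ S) (half_pos hε))
  obtain ⟨v, hvS, hv⟩ := (infDist_lt_iff hne).1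
    (lt_add_of_pos_right (infDist c₂ S) (half_pos hε))
  calc infDist (c₁ + c₂) S ≤ dist (c₁ + c₂) (u + v) := infDist_le_dist_of_mem (hS u huS v hvS)
    _ ≤ dist c₁ u + dist c₂ v := dist_add_add_le _ _ _ _
    _ ≤ infDist c₁ S + infDist c₂ S + ε := by linarith

/-- Key fibre estimate for a single generator. -/
lemma infDist_generator_le {X : Type*} [TopologicalSpace X] {A : Type*} [CStarAlgebra A]
    (Φ : C(X, ℂ) →⋆ₐ[ℂ] A) (f : C(X, ℂ)) (b : A) (x : X) :
    infDist (Φ f * b) (fiberIdeal Φ x) ≤ ‖f x‖ * ‖b‖ := by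
  set f' : C(X, ℂ) := f - algebraMap ℂ C(X, ℂ) (f x) with hf'
  have hf'x : f' x = 0 := by simp [hf']
  have hmem : Φ f' * b ∈ fiberIdeal Φ x :=
    subset_closure (AddSubmonoid.subset_closure ⟨f', b, hf'x, rfl⟩)
  have hdiff : Φ f * b - Φ f' * b = f x • b := by
    have : Φ f - Φ f' = algebraMap ℂ A (f x) := by
      rw [hf', map_sub, AlgHomClass.commutes]
      abel
    rw [← sub_mul, this, Algebra.algebraMap_eq_smul_one, smul_mul_assoc, one_mul]
  calc infDist (Φ f * b) (fiberIdeal Φ x) ≤ dist (Φ f * b) (Φ f' * b) :=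
        infDist_le_dist_of_mem hmem
    _ = ‖f x • b‖ := by rw [dist_eq_norm, hdiff]
    _ = ‖f x‖ * ‖b‖ := norm_smul _ _


lemma exists_control {X : Type*} [TopologicalSpace X] {A : Type*} [CStarAlgebra A]
    (Φ : C(X, ℂ) →⋆ₐ[ℂ] A) (x₀ : X) (c : A)
    (hc : c ∈ AddSubmonoid.closure
      {c : A | ∃ (f : C(X, ℂ)) (a : A), f x₀ = 0 ∧ c = Φ f * a}) :
    ∃ g : X → ℝ, Continuous g ∧ g x₀ = 0 ∧
      ∀ x, infDist c (fiberIdeal Φ x) ≤ g x := by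
  induction hc using AddSubmonoid.closure_induction with
  | mem z hz =>
    obtain ⟨f, w, hfx₀, rfl⟩ := hz
    refine ⟨fun x => ‖f x‖ * ‖w‖, by continuity, by simp [hfx₀], fun x => ?_⟩
    exact infDist_generator_le Φ f w x
  | zero =>
    refine ⟨fun _ => 0, continuous_const, rfl, fun x => ?_⟩
    rw [show infDist 0 (fiberIdeal Φ x) = 0 from
      infDist_zero_of_mem (subset_closure (AddSubmonoid.zero_mem _))]
  | add z₁ z₂ _ _ h₁ h₂ =>
    obtain ⟨g₁, hg₁c, hg₁x₀, hg₁⟩ := h₁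
    obtain ⟨g₂, hg₂c, hg₂x₀, hg₂⟩ := h₂
    refine ⟨g₁ + g₂, hg₁c.add hg₂c, by simp [hg₁x₀, hg₂x₀], fun x => ?_⟩
    calc infDist (z₁ + z₂) (fiberIdeal Φ x)
        ≤ infDist z₁ (fiberIdeal Φ x) + infDist z₂ (fiberIdeal Φ x) :=
          infDist_add_le' (fiberIdeal_nonempty Φ x)
            (fun u hu v hv => fiberIdeal_add_mem Φ x hu hv) z₁ z₂
      _ ≤ g₁ x + g₂ x := add_le_add (hg₁ x) (hg₂ x)

/-- Let `X` be a compact Hausdorff space, `A` a unital `C(X)`-algebra and `a ∈ A`.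
Then the fibre norm function `x ↦ ‖a_x‖ = dist(a, I_x)` is upper semicontinuous. -/
theorem stmt10 {X : Type*} [TopologicalSpace X] [CompactSpace X] [T2Space X]
    {A : Type*} [CStarAlgebra A]
    (Φ : C(X, ℂ) →⋆ₐ[ℂ] A) (hΦ : ∀ f : C(X, ℂ), ∀ a : A, Φ f * a = a * Φ f)
    (a : A) :
    UpperSemicontinuous (fun x : X => Metric.infDist a (fiberIdeal Φ x)) := by
  intro x₀ y hy
  simp only at hy ⊢
  set d := infDist a (fiberIdeal Φ x₀) with hd
  set ε := (y - d) / 3 with hεdef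
  have hε : 0 < ε := by
    have : d < y := hy
    simp only [hεdef]; linarith
  obtain ⟨b, hb, hab⟩ := (infDist_lt_iff (fiberIdeal_nonempty Φ x₀)).1
    (show d < d + ε by linarith)
  obtain ⟨c, hc, hbc⟩ := Metric.mem_closure_iff.1 hb ε hε
  -- `c` is in the additive closure of generators vanishing at `x₀`
  have key := exists_control Φ x₀ c hc
  obtain ⟨g, hgc, hgx₀, hg⟩ := key
  have hU : ∀ᶠ x in nhds x₀, g x < ε := by
    have : Set.Iio ε ∈ nhds (g x₀) := by rw [hgx₀]; exact Iio_mem_nhds hε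
    exact hgc.continuousAt.eventually_mem this
  filter_upwards [hU] with x hx
  have hac : dist a c < d + 2 * ε := by
    calc dist a c ≤ dist a b + dist b c := dist_triangle _ _ _
      _ < (d + ε) + ε := add_lt_add hab hbc
      _ = d + 2 * ε := by ring
  calc infDist a (fiberIdeal Φ x)
      ≤ infDist c (fiberIdeal Φ x) + dist a c := infDist_le_infDist_add_dist
    _ < g x + (d + 2 * ε) := by
        have := hg x; linarith
    _ < ε + (d + 2 * ε) := by linarith
    _ = y := by simp only [hεdef]; ring
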